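/- If ‖B_J‖_∞ < 1 (strict diagonal dominance by rows), then for every splitting (B₁,...,B_d) of B_J the iteration matrix satisfies ρ(𝓑_{(d)}) < 1, i.e., the splitting method converges. -/
import Mathlib


open Matrix

/-- A splitting of `B`: nonzero parts summing to `B` with pairwise vanishing
Hadamard products. -/
def IsSplitting {n d : ℕ} (B : Matrix (Fin n) (Fin n) ℝ)
    (Bs : Fin d → Matrix (Fin n) (Fin n) ℝ) : Prop :=
  (∀ p, Bs p ≠ 0) ∧ (∑ p, Bs p = B) ∧
    ∀ p q, p ≠ q → Matrix.hadamard (Bs p) (Bs q) = 0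

/-- Strictly block-lower-triangular part `𝓛` of the splitting scheme. -/
def blockL {n d : ℕ} (Bs : Fin d → Matrix (Fin n) (Fin n) ℝ) :
    Matrix (Fin d × Fin n) (Fin d × Fin n) ℝ :=
  Matrix.of fun pi qj => if qj.1 < pi.1 then Bs qj.1 pi.2 qj.2 else 0

/-- Block-upper-triangular part `𝓤` of the splitting scheme. -/
def blockU {n d : ℕ} (Bs : Fin d → Matrix (Fin n) (Fin n) ℝ) :
    Matrix (Fin d × Fin n) (Fin d × Fin n) ℝ :=
  Matrix.of fun pi qj => if pi.1 ≤ qj.1 then Bs qj.1 pi.2 qj.2 else 0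

/-- The iteration matrix `𝓑 = (𝓘 - 𝓛)⁻¹ 𝓤` of a splitting. -/
noncomputable def iterMat {n d : ℕ} (Bs : Fin d → Matrix (Fin n) (Fin n) ℝ) :
    Matrix (Fin d × Fin n) (Fin d × Fin n) ℝ :=
  (1 - blockL Bs)⁻¹ * blockU Bs

/-- Complexification of the iteration matrix. -/
noncomputable def iterMatC {n d : ℕ} (Bs : Fin d → Matrix (Fin n) (Fin n) ℝ) :
    Matrix (Fin d × Fin n) (Fin d × Fin n) ℂ :=
  (iterMat Bs).map Complex.ofReal

/-- Spectral radius of a real matrix, via its complexification. -/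
noncomputable def specRad {m : Type*} [Fintype m] [DecidableEq m]
    (M : Matrix m m ℝ) : ENNReal :=
  spectralRadius ℂ (M.map Complex.ofReal)

/-- The maximum absolute row sum norm `‖·‖_∞` of a matrix. -/
noncomputable def infNorm {m k : Type*} [Fintype k] (M : Matrix m k ℝ) : ℝ :=
  ⨆ i, ∑ j, |M i j|

lemma abs_sum_pairwise {d : ℕ} (a : Fin d → ℝ) (h : ∀ p q, p ≠ q → a p * a q = 0) :
    ∑ p, |a p| = |∑ p, a p| := by
  by_cases he : ∃ p, a p ≠ 0
  · obtain ⟨p₀, hp₀⟩ := he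
    have hz : ∀ q, q ≠ p₀ → a q = 0 := fun q hq =>
      (mul_eq_zero.mp (h p₀ q (Ne.symm hq))).resolve_left hp₀
    rw [Finset.sum_eq_single p₀ (fun q _ hq => hz q hq) (by simp),
        Finset.sum_eq_single p₀ (fun q _ hq => by rw [hz q hq, abs_zero]) (by simp)]
  · push_neg at he
    simp [he]

/-- Strict diagonal dominance by rows (`‖B_J‖_∞ < 1`) implies convergence of
every splitting method: `ρ(𝓑_{(d)}) < 1`. -/
theorem convergence_row_dominance (n d : ℕ) (BJ : Matrix (Fin n) (Fin n) ℝ)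
    (Bs : Fin d → Matrix (Fin n) (Fin n) ℝ)
    (hsplit : IsSplitting BJ Bs)
    (hdom : infNorm BJ < 1) :
    specRad (iterMat Bs) < 1 := by
  obtain ⟨-, hsum, hhad⟩ := hsplit
  set K : ℝ := infNorm BJ with hKdef
  set r : ℝ := max K 0 with hrdef
  have hr1 : r < 1 := max_lt hdom one_pos
  have hr0 : (0:ℝ) ≤ r := le_max_right _ _
  -- row sums of the splitting are bounded by r
  have hrow : ∀ i : Fin n, ∑ qj : Fin d × Fin n, |Bs qj.1 i qj.2| ≤ r := by
    intro i
    have h1 : ∑ qj : Fin d × Fin n, |Bs qj.1 i qj.2| = ∑ j, |BJ i j| := by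
      rw [Fintype.sum_prod_type, Finset.sum_comm]
      refine Finset.sum_congr rfl fun j _ => ?_
      have : BJ i j = ∑ p, Bs p i j := by rw [← hsum, Matrix.sum_apply]
      rw [this, abs_sum_pairwise]
      intro p q hpq
      have := hhad p q hpq
      have := congrFun (congrFun this i) j
      simpa [Matrix.hadamard_apply] using this
    rw [h1]
    refine le_trans ?_ (le_max_left K 0)
    show ∑ j, |BJ i j| ≤ ⨆ i', ∑ j, |BJ i' j|
    exact le_ciSup (Finite.bddAbove_range fun i' => ∑ j, |BJ i' j|) i
  -- complexified matrices
  set Lc : Matrix (Fin d × Fin n) (Fin d × Fin n) ℂ := (blockL Bs).map Complex.ofReal with hLc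
  set Uc : Matrix (Fin d × Fin n) (Fin d × Fin n) ℂ := (blockU Bs).map Complex.ofReal with hUc
  set E : Matrix (Fin d × Fin n) (Fin d × Fin n) ℂ := 1 - Lc with hE
  -- 1 - Lc is strictly row diagonally dominant
  have hEdet : E.det ≠ 0 := by
    apply det_ne_zero_of_sum_row_lt_diag
    rintro ⟨p, i⟩
    have hdiag : E (p, i) (p, i) = 1 := by
      simp [hE, hLc, blockL, Matrix.sub_apply, Matrix.one_apply]
    rw [hdiag, norm_one]
    calc ∑ qj ∈ Finset.univ.erase (p, i), ‖E (p, i) qj‖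
        ≤ ∑ qj ∈ Finset.univ.erase (p, i), |Bs qj.1 i qj.2| := by
          refine Finset.sum_le_sum ?_
          rintro ⟨q, j⟩ hqj
          have hne : ((q, j) : Fin d × Fin n) ≠ (p, i) := (Finset.mem_erase.mp hqj).1
          have : E (p, i) (q, j) = -Lc (p, i) (q, j) := by
            simp [hE, Matrix.sub_apply, Matrix.one_apply_ne' hne]
          rw [this, norm_neg]
          simp only [hLc, Matrix.map_apply, blockL, Matrix.of_apply]
          split_ifs
          · simp
          · simp [abs_nonneg]
      _ ≤ ∑ qj : Fin d × Fin n, |Bs qj.1 i qj.2| :=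
          Finset.sum_le_sum_of_subset_of_nonneg (Finset.erase_subset _ _)
            (fun _ _ _ => abs_nonneg _)
      _ ≤ r := hrow i
      _ < 1 := hr1
  -- the real matrix 1 - L is invertible
  have hFdet : (1 - blockL Bs).det ≠ 0 := by
    intro h0
    apply hEdet
    have h2 : E = (1 - blockL Bs).map (Complex.ofRealHom : ℝ →+* ℂ) := by
      ext pi qj
      simp [hE, hLc, Matrix.sub_apply, Matrix.map_apply, Matrix.one_apply]
      split_ifs <;> simp
    rw [h2, show ((1 - blockL Bs).map (Complex.ofRealHom : ℝ →+* ℂ))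
        = Complex.ofRealHom.mapMatrix (1 - blockL Bs) from rfl,
      ← RingHom.map_det, h0, map_zero]
  have hFunit : IsUnit (1 - blockL Bs).det := isUnit_iff_ne_zero.mpr hFdet
  -- complexification of the iteration matrix
  have hMc : (iterMat Bs).map Complex.ofReal = E⁻¹ * Uc := by
    have hmap : (iterMat Bs).map Complex.ofReal
        = ((1 - blockL Bs)⁻¹).map (Complex.ofRealHom : ℝ →+* ℂ) * Uc := by
      show ((1 - blockL Bs)⁻¹ * blockU Bs).map (Complex.ofRealHom : ℝ →+* ℂ)
          = ((1 - blockL Bs)⁻¹).map (Complex.ofRealHom : ℝ →+* ℂ) * Uc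
      rw [Matrix.map_mul]; rfl
    have hinv : ((1 - blockL Bs)⁻¹).map (Complex.ofRealHom : ℝ →+* ℂ) = E⁻¹ := by
      refine (Matrix.inv_eq_right_inv ?_).symm
      have : (1 - blockL Bs) * (1 - blockL Bs)⁻¹ = 1 := Matrix.mul_nonsing_inv _ hFunit
      calc E * ((1 - blockL Bs)⁻¹).map (Complex.ofRealHom : ℝ →+* ℂ)
          = ((1 - blockL Bs) * (1 - blockL Bs)⁻¹).map (Complex.ofRealHom : ℝ →+* ℂ) := by
            rw [Matrix.map_mul]
            congr 1
            ext pi qj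
            simp [hE, hLc, Matrix.sub_apply, Matrix.map_apply, Matrix.one_apply]
            split_ifs <;> simp
        _ = 1 := by rw [this, Matrix.map_one] <;> simp
    rw [hmap, hinv]
  -- every spectral value has norm ≤ r
  have hspec : ∀ μ : ℂ, μ ∈ spectrum ℂ ((iterMat Bs).map Complex.ofReal) → ‖μ‖ ≤ r := by
    intro μ hμ
    by_contra hgt
    push_neg at hgt
    apply spectrum.mem_iff.mp hμ
    rw [Matrix.isUnit_iff_isUnit_det, isUnit_iff_ne_zero]
    -- the key diagonally dominant matrix
    set m : ℝ := max ‖μ‖ 1 with hm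
    have hm1 : (1:ℝ) ≤ m := le_max_right _ _
    have hmr : m * r < ‖μ‖ := by
      rcases le_total ‖μ‖ 1 with h | h
      · rw [hm, max_eq_right h, one_mul]; exact hgt
      · rw [hm, max_eq_left h]
        calc ‖μ‖ * r < ‖μ‖ * 1 :=
              mul_lt_mul_of_pos_left hr1 (lt_of_lt_of_le one_pos h)
          _ = ‖μ‖ := mul_one _
    set D : Matrix (Fin d × Fin n) (Fin d × Fin n) ℂ := μ • E - Uc with hD
    have hDdet : D.det ≠ 0 := by
      apply det_ne_zero_of_sum_row_lt_diag
      rintro ⟨p, i⟩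
      have hdd : D (p, i) (p, i) = μ - (Bs p i i : ℂ) := by
        simp [hD, hE, hUc, hLc, Matrix.sub_apply, Matrix.smul_apply, Matrix.one_apply,
          blockL, blockU, Matrix.map_apply]
      have hbound : ∀ qj : Fin d × Fin n, qj ≠ (p, i) →
          ‖D (p, i) qj‖ ≤ m * |Bs qj.1 i qj.2| := by
        rintro ⟨q, j⟩ hne
        have h1 : (1 : Matrix (Fin d × Fin n) (Fin d × Fin n) ℂ) (p, i) (q, j) = 0 :=
          Matrix.one_apply_ne' hne
        rcases lt_or_ge q p with hqp | hpq
        · have : D (p, i) (q, j) = -(μ * (Bs q i j : ℂ)) := by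
            simp [hD, hE, hUc, hLc, Matrix.sub_apply, Matrix.smul_apply, h1,
              blockL, blockU, Matrix.map_apply, hqp, not_le.mpr hqp, smul_eq_mul]
          rw [this, norm_neg, norm_mul, Complex.norm_real, Real.norm_eq_abs]
          exact mul_le_mul_of_nonneg_right (le_max_left _ _) (abs_nonneg _)
        · have : D (p, i) (q, j) = -(Bs q i j : ℂ) := by
            simp [hD, hE, hUc, hLc, Matrix.sub_apply, Matrix.smul_apply, h1,
              blockL, blockU, Matrix.map_apply, hpq, not_lt.mpr hpq]
          rw [this, norm_neg, Complex.norm_real, Real.norm_eq_abs]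
          exact le_mul_of_one_le_left (abs_nonneg _) hm1
      have hb0 : (0:ℝ) ≤ |Bs p i i| := abs_nonneg _
      calc ∑ qj ∈ Finset.univ.erase (p, i), ‖D (p, i) qj‖
          ≤ ∑ qj ∈ Finset.univ.erase (p, i), m * |Bs qj.1 i qj.2| :=
            Finset.sum_le_sum fun qj hqj => hbound qj (Finset.mem_erase.mp hqj).1
        _ = (∑ qj : Fin d × Fin n, m * |Bs qj.1 i qj.2|) - m * |Bs p i i| :=
            Finset.sum_erase_eq_sub (Finset.mem_univ _)
        _ = m * (∑ qj : Fin d × Fin n, |Bs qj.1 i qj.2|) - m * |Bs p i i| := by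
            rw [Finset.mul_sum]
        _ ≤ m * r - m * |Bs p i i| := by
            have := hrow i
            nlinarith [hm1]
        _ ≤ m * r - |Bs p i i| := by nlinarith [hm1, hb0]
        _ < ‖μ‖ - |Bs p i i| := by linarith [hmr]
        _ ≤ ‖μ - (Bs p i i : ℂ)‖ := by
            have := norm_sub_norm_le μ ((Bs p i i : ℂ))
            rw [Complex.norm_real, Real.norm_eq_abs] at this
            exact this
        _ = ‖D (p, i) (p, i)‖ := by rw [hdd]
    -- relate the determinants
    have hkey : E * (algebraMap ℂ (Matrix (Fin d × Fin n) (Fin d × Fin n) ℂ) μ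
        - (iterMat Bs).map Complex.ofReal) = D := by
      rw [Algebra.algebraMap_eq_smul_one, hMc, mul_sub, mul_smul_comm, mul_one,
        ← Matrix.mul_assoc, Matrix.mul_nonsing_inv _ (isUnit_iff_ne_zero.mpr hEdet),
        Matrix.one_mul, hD]
    intro h0
    apply hDdet
    rw [← hkey, Matrix.det_mul, h0, mul_zero]
  -- conclude
  have : specRad (iterMat Bs) ≤ (r.toNNReal : ENNReal) := by
    rw [specRad, spectralRadius]
    refine iSup₂_le fun μ hμ => ?_
    have h1 : ‖μ‖ ≤ r := hspec μ hμ
    rw [ENNReal.coe_le_coe]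
    rw [← NNReal.coe_le_coe, coe_nnnorm, Real.coe_toNNReal r hr0]
    exact h1
  refine lt_of_le_of_lt this ?_
  rw [← ENNReal.coe_one, ENNReal.coe_lt_coe]
  exact Real.toNNReal_lt_one.mpr hr1
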